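/- Fix reals r > 0 and δ ∈ (0, 1). For s ∈ {−1, 1}, define g_s : ℝ → ℝ by g_s(θ) = ((1 + δ·s)/2)·max(r − θ, 0) + ((1 − δ·s)/2)·max(r + θ, 0). Then (i) the infimum of g_s over [−r, r] equals r(1 − δ), attained at θ = r·s; and (ii) the infimum of g₁ + g₋₁ over [−r, r] minus the two individual minima equals 2·r·δ. -/
import Mathlib


/-- Expected hinge loss under the two-point sampling distribution:
`g_s(θ) = ((1+δs)/2)·max(r−θ,0) + ((1−δs)/2)·max(r+θ,0)`. -/
noncomputable def gfun (r δ s θ : ℝ) : ℝ :=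
  ((1 + δ * s) / 2) * max (r - θ) 0 + ((1 - δ * s) / 2) * max (r + θ) 0

lemma gfun_eq (r δ s θ : ℝ) (hθ : θ ∈ Set.Icc (-r) r) :
    gfun r δ s θ = r - δ * s * θ := by
  obtain ⟨h1, h2⟩ := hθ
  unfold gfun
  rw [max_eq_left (by linarith), max_eq_left (by linarith)]
  ring

theorem stmt11 (r δ : ℝ) (hr : 0 < r) (hδ : δ ∈ Set.Ioo (0 : ℝ) 1) :
    (∀ s : ℝ, s = 1 ∨ s = -1 →
      IsLeast (gfun r δ s '' Set.Icc (-r) r) (r * (1 - δ)) ∧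
        gfun r δ s (r * s) = r * (1 - δ)) ∧
    sInf ((fun θ => gfun r δ 1 θ + gfun r δ (-1) θ) '' Set.Icc (-r) r)
        - (r * (1 - δ) + r * (1 - δ)) = 2 * r * δ := by
  obtain ⟨hδ0, hδ1⟩ := hδ
  constructor
  · intro s hs
    have hmem : r * s ∈ Set.Icc (-r) r := by
      rcases hs with h | h <;> subst h <;> constructor <;> simp <;> linarith
    have hval : gfun r δ s (r * s) = r * (1 - δ) := by
      rw [gfun_eq r δ s _ hmem]
      rcases hs with h | h <;> subst h <;> ring
    refine ⟨⟨⟨r * s, hmem, hval⟩, ?_⟩, hval⟩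
    rintro y ⟨θ, hθ, rfl⟩
    rw [gfun_eq r δ s θ hθ]
    obtain ⟨h1, h2⟩ := hθ
    rcases hs with h | h <;> subst h <;> nlinarith
  · have himg : (fun θ => gfun r δ 1 θ + gfun r δ (-1) θ) '' Set.Icc (-r) r = {2 * r} := by
      apply Set.eq_singleton_iff_nonempty_unique_mem.mpr
      constructor
      · exact ⟨(fun θ => gfun r δ 1 θ + gfun r δ (-1) θ) 0, ⟨0, by constructor <;> simp [hr.le], rfl⟩⟩
      · rintro y ⟨θ, hθ, rfl⟩
        simp only
        rw [gfun_eq r δ 1 θ hθ, gfun_eq r δ (-1) θ hθ]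
        ring
    rw [himg]
    simp
    ring
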